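/- Clock acceleration under reduction: if M ↠β N and M head-reduces in k steps to a head normal form λx1…xn.y M1 … Mm, then N head-reduces in ℓ steps, for some ℓ ≤ k, to a head normal form λx1…xn.y N1 … Nm with the same abstraction prefix, the same head variable y, the same number m of arguments, and Mi ↠β Ni for each i = 1, …, m. -/

import Mathlib

/-- Untyped λ-terms in de Bruijn notation. -/
inductive Lam : Type
  | var : Nat → Lam
  | app : Lam → Lam → Lam
  | lam : Lam → Lam
  deriving DecidableEq

namespace Lam

/-- Lift (shift) free variables ≥ `d` by one. -/
def lift (d : Nat) : Lam → Lam
  | var n => if n < d then var n else var (n + 1)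
  | app s t => app (lift d s) (lift d t)
  | lam t => lam (lift (d + 1) t)

/-- Capture-avoiding substitution of `u` for the variable with index `k`. -/
def subst (k : Nat) (u : Lam) : Lam → Lam
  | var n => if n = k then u else if k < n then var (n - 1) else var n
  | app s t => app (subst k u s) (subst k u t)
  | lam t => lam (subst (k + 1) (lift 0 u) t)

/-- One-step β-reduction `→β` (compatible closure of the β-rule). -/
inductive Step : Lam → Lam → Prop
  | beta (t u : Lam) : Step (app (lam t) u) (subst 0 u t)
  | appL {s s' : Lam} (t : Lam) : Step s s' → Step (app s t) (app s' t)
  | appR (s : Lam) {t t' : Lam} : Step t t' → Step (app s t) (app s t')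
  | lam {t t' : Lam} : Step t t' → Step (lam t) (lam t')

/-- Many-step β-reduction `↠β`. -/
def Red : Lam → Lam → Prop := Relation.ReflTransGen Step

/-- β-convertibility `=β`. -/
def Conv : Lam → Lam → Prop := Relation.EqvGen Step

/-- `Y` is a fixed point combinator: `Y x =β x (Y x)` for a fresh variable `x`. -/
def isFPC (Y : Lam) : Prop :=
  Conv (app (lift 0 Y) (var 0)) (app (var 0) (app (lift 0 Y) (var 0)))

/-- `M P^n`: `M` applied to `n` copies of `P`. -/
def appIter (M P : Lam) : Nat → Lam
  | 0 => M
  | n + 1 => appIter (app M P) P n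

/-- `I = λx.x` -/
def K_I : Lam := lam (var 0)

/-- `S = λxyz.xz(yz)` -/
def K_S : Lam := lam (lam (lam (app (app (var 2) (var 0)) (app (var 1) (var 0)))))

/-- `B = λxyz.x(yz)` -/
def K_B : Lam := lam (lam (lam (app (var 2) (app (var 1) (var 0)))))

/-- `δ = λab.b(ab)` -/
def K_delta : Lam := lam (lam (app (var 0) (app (var 1) (var 0))))

/-- `ω_f = λx.f(xx)` (with `f` the variable bound just outside). -/
def K_omega : Lam := lam (app (var 1) (app (var 0) (var 0)))

/-- Curry's fpc `Y0 = λf.ω_f ω_f`. -/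
def Y0 : Lam := lam (app K_omega K_omega)

/-- `η = λxf.f(xxf)` -/
def K_eta : Lam := lam (lam (app (var 0) (app (app (var 1) (var 1)) (var 0))))

/-- Turing's fpc `Y1 = ηη`. -/
def Y1 : Lam := app K_eta K_eta

/-- One head reduction step: contraction of the head redex. -/
inductive Head : Lam → Lam → Prop
  | beta (t u : Lam) : Head (app (lam t) u) (subst 0 u t)
  | app {s s' : Lam} (t : Lam) : (∀ u, s ≠ lam u) → Head s s' → Head (app s t) (app s' t)
  | lam {t t' : Lam} : Head t t' → Head (lam t) (lam t')

/-- Exactly `k` head reduction steps. -/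
def HeadN : Nat → Lam → Lam → Prop
  | 0, s, t => s = t
  | k + 1, s, t => ∃ u, Head s u ∧ HeadN k u t

/-- Exactly `k` β-reduction steps. -/
def StepN : Nat → Lam → Lam → Prop
  | 0, s, t => s = t
  | k + 1, s, t => ∃ u, Step s u ∧ StepN k u t

/-- `n`-fold λ-abstraction. -/
def lamN : Nat → Lam → Lam
  | 0, t => t
  | n + 1, t => lam (lamN n t)

/-- `M M1 ⋯ Mm`: `M` applied to a list of arguments. -/
def appList (M : Lam) (Ms : List Lam) : Lam := Ms.foldl app M


/-! ### Auxiliary lemmas -/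

lemma lift_lift (t : Lam) : ∀ i j, i ≤ j → lift i (lift j t) = lift (j+1) (lift i t) := by
  induction t with
  | var n =>
    intro i j h
    simp only [lift]
    split_ifs <;> simp only [lift] <;> split_ifs <;>
      first | rfl | (simp only [var.injEq]; omega) | (exfalso; omega)
  | app s t ihs iht => intro i j h; simp only [lift, ihs _ _ h, iht _ _ h]
  | lam t ih => intro i j h; simp only [lift, ih (i+1) (j+1) (by omega)]

lemma lift_subst_ge (t : Lam) : ∀ k d (u : Lam), k ≤ d →
    lift d (subst k u t) = subst k (lift d u) (lift (d+1) t) := by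
  induction t with
  | var n =>
    intro k d u h
    simp only [subst, lift]
    split_ifs <;> simp only [lift, subst] <;> split_ifs <;>
      first | rfl | (simp only [var.injEq]; omega) | (exfalso; omega)
  | app s t ihs iht => intro k d u h; simp only [lift, subst, ihs _ _ _ h, iht _ _ _ h]
  | lam t ih =>
    intro k d u h
    simp only [lift, subst, ih (k+1) (d+1) (lift 0 u) (by omega)]
    rw [lift_lift u 0 d (by omega)]

lemma lift_subst_le (t : Lam) : ∀ k d (u : Lam), d ≤ k →
    lift d (subst k u t) = subst (k+1) (lift d u) (lift d t) := by
  induction t with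
  | var n =>
    intro k d u h
    simp only [subst, lift]
    split_ifs <;> simp only [lift, subst] <;> split_ifs <;>
      first | rfl | (simp only [var.injEq]; omega) | (exfalso; omega)
  | app s t ihs iht => intro k d u h; simp only [lift, subst, ihs _ _ _ h, iht _ _ _ h]
  | lam t ih =>
    intro k d u h
    simp only [lift, subst, ih (k+1) (d+1) (lift 0 u) (by omega)]
    rw [lift_lift u 0 d (by omega)]

lemma subst_lift_cancel (t : Lam) : ∀ k (v : Lam), subst k v (lift k t) = t := by
  induction t with
  | var n =>
    intro k v
    simp only [lift, subst]
    split_ifs <;> simp only [subst] <;> split_ifs <;>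
      first | rfl | (simp only [var.injEq]; omega) | (exfalso; omega)
  | app s t ihs iht => intro k v; simp only [lift, subst, ihs, iht]
  | lam t ih => intro k v; simp only [lift, subst, ih]

lemma subst_subst (t : Lam) : ∀ j k (u w : Lam), j ≤ k →
    subst k u (subst j w t) = subst j (subst k u w) (subst (k+1) (lift j u) t) := by
  induction t with
  | var n =>
    intro j k u w h
    simp only [subst]
    split_ifs <;> (try simp only [subst]) <;> (try split_ifs) <;>
      first | rfl | (simp only [var.injEq]; omega) | (exfalso; omega) | (rw [subst_lift_cancel])
  | app s t ihs iht => intro j k u w h; simp only [subst, ihs _ _ _ _ h, iht _ _ _ _ h]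
  | lam t ih =>
    intro j k u w h
    simp only [subst, ih (j+1) (k+1) (lift 0 u) (lift 0 w) (by omega)]
    rw [← lift_subst_le w k 0 u (by omega), lift_lift u 0 j (by omega)]

lemma step_lift {t t' : Lam} (h : Step t t') : ∀ d, Step (lift d t) (lift d t') := by
  induction h with
  | beta t u =>
    intro d
    rw [lift_subst_ge t 0 d u (by omega)]
    exact Step.beta (lift (d+1) t) (lift d u)
  | appL t _ ih => intro d; exact Step.appL _ (ih d)
  | appR s _ ih => intro d; exact Step.appR _ (ih d)
  | lam _ ih => intro d; exact Step.lam (ih (d+1))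

lemma step_subst_left {t t' : Lam} (h : Step t t') : ∀ k (u : Lam),
    Step (subst k u t) (subst k u t') := by
  induction h with
  | beta a b =>
    intro k u
    rw [subst_subst a 0 k u b (by omega)]
    exact Step.beta (subst (k+1) (lift 0 u) a) (subst k u b)
  | appL t _ ih => intro k u; exact Step.appL _ (ih k u)
  | appR s _ ih => intro k u; exact Step.appR _ (ih k u)
  | lam _ ih => intro k u; exact Step.lam (ih (k+1) (lift 0 u))

lemma red_appL {s s' : Lam} (t : Lam) (h : Red s s') : Red (app s t) (app s' t) :=
  Relation.ReflTransGen.lift (fun x => app x t) (fun _ _ h => Step.appL t h) _ _ h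

lemma red_appR (s : Lam) {t t' : Lam} (h : Red t t') : Red (app s t) (app s t') :=
  Relation.ReflTransGen.lift (fun x => app s x) (fun _ _ h => Step.appR s h) _ _ h

lemma red_lam {t t' : Lam} (h : Red t t') : Red (lam t) (lam t') :=
  Relation.ReflTransGen.lift Lam.lam (fun _ _ h => Step.lam h) _ _ h

lemma red_subst_right (t : Lam) : ∀ k {u u' : Lam}, Step u u' →
    Red (subst k u t) (subst k u' t) := by
  induction t with
  | var n =>
    intro k u u' h
    simp only [subst]
    split_ifs
    · exact Relation.ReflTransGen.single h
    · exact Relation.ReflTransGen.refl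
    · exact Relation.ReflTransGen.refl
  | app s t ihs iht =>
    intro k u u' h
    exact Relation.ReflTransGen.trans (red_appL _ (ihs k h)) (red_appR _ (iht k h))
  | lam t ih => intro k u u' h; exact red_lam (ih (k+1) (step_lift h 0))

lemma head_not_lam {s s' : Lam} (hne : ∀ u, s ≠ lam u) (hh : Head s s')
    {v : Lam} {s₂ : Lam} (hst : Step s s₂) (hl : s₂ = lam v) : s₂ = s' := by
  cases hh with
  | beta t u =>
    cases hst with
    | beta => rfl
    | appL _ h =>
      cases h with
      | lam h => exact Lam.noConfusion hl
    | appR _ h => exact Lam.noConfusion hl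
  | app t hne' hh' => cases hst with
    | beta t u => exact absurd rfl (hne' _)
    | appL _ _ => exact Lam.noConfusion hl
    | appR _ _ => exact Lam.noConfusion hl
  | lam _ => exact absurd rfl (hne _)

/-- Commutation of an arbitrary step with the head step. -/
lemma head_step_comm {M M₁ : Lam} (hh : Head M M₁) :
    ∀ {N}, Step M N → N = M₁ ∨ ∃ N₁, Head N N₁ ∧ Red M₁ N₁ := by
  induction hh with
  | beta t u =>
    intro N hst
    cases hst with
    | beta => exact Or.inl rfl
    | appL _ h =>
      cases h with
      | lam h =>
        right
        exact ⟨_, Head.beta _ u, Relation.ReflTransGen.single (step_subst_left h 0 u)⟩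
    | appR _ h =>
      right
      exact ⟨_, Head.beta t _, red_subst_right t 0 h⟩
  | app t hne hh' ih =>
    intro N hst
    cases hst with
    | beta t u => exact absurd rfl (hne _)
    | appL _ h =>
      rename_i s s' s₂
      by_cases hl : ∃ v, s₂ = lam v
      · obtain ⟨v, hv⟩ := hl
        left
        rw [head_not_lam hne hh' h hv]
      · rcases ih h with rfl | ⟨s₃, hh₃, hr₃⟩
        · exact Or.inl rfl
        · exact Or.inr ⟨app s₃ t, Head.app t (fun u hu => hl ⟨u, hu⟩) hh₃, red_appL t hr₃⟩
    | appR _ h =>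
      rename_i s s' t'
      exact Or.inr ⟨app s' t', Head.app t' hne hh', red_appR s' (Relation.ReflTransGen.single h)⟩
  | lam hh' ih =>
    intro N hst
    cases hst with
    | lam h =>
      rcases ih h with rfl | ⟨t₃, hh₃, hr₃⟩
      · exact Or.inl rfl
      · exact Or.inr ⟨_, Head.lam hh₃, red_lam hr₃⟩

lemma appList_ne_lam (y : Nat) : ∀ (Ms : List Lam) M, (∀ u, M ≠ lam u) →
    ∀ u, appList M Ms ≠ lam u := by
  intro Ms
  induction Ms with
  | nil => intro M h u; exact h u
  | cons a Ms ih => intro M h u; exact ih (app M a) (fun v hv => Lam.noConfusion hv) u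

lemma spine_step (y : Nat) : ∀ (Ms : List Lam) {N}, Step (appList (var y) Ms) N →
    ∃ Ns, N = appList (var y) Ns ∧ List.Forall₂ Red Ms Ns := by
  intro Ms
  induction Ms using List.reverseRecOn with
  | nil => intro N h; simp only [appList, List.foldl_nil] at h; cases h
  | append_singleton Ms a ih =>
    intro N h
    simp only [appList, List.foldl_append, List.foldl_cons, List.foldl_nil] at h ⊢
    generalize hP : List.foldl app (var y) Ms = P at h
    cases h with
    | beta t u => exact absurd hP (appList_ne_lam y Ms (var y) (fun v hv => Lam.noConfusion hv) t)
    | appL _ h =>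
      subst hP
      obtain ⟨Ns, rfl, hf⟩ := ih h
      refine ⟨Ns ++ [a], by simp [appList], ?_⟩
      exact List.rel_append hf (List.Forall₂.cons Relation.ReflTransGen.refl List.Forall₂.nil)
    | appR _ h =>
      subst hP
      rename_i a'
      refine ⟨Ms ++ [a'], by simp [appList], ?_⟩
      exact List.rel_append (List.forall₂_same.2 (fun x _ => Relation.ReflTransGen.refl))
        (List.Forall₂.cons (Relation.ReflTransGen.single h) List.Forall₂.nil)

lemma hnf_step (y : Nat) : ∀ (n : Nat) (Ms : List Lam) {N},
    Step (lamN n (appList (var y) Ms)) N →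
    ∃ Ns, N = lamN n (appList (var y) Ns) ∧ List.Forall₂ Red Ms Ns := by
  intro n
  induction n with
  | zero => intro Ms N h; exact spine_step y Ms h
  | succ n ih =>
    intro Ms N h
    cases h with
    | lam h =>
      obtain ⟨Ns, rfl, hf⟩ := ih Ms h
      exact ⟨Ns, rfl, hf⟩

lemma forall₂_red_trans : ∀ {as bs cs : List Lam},
    List.Forall₂ Red as bs → List.Forall₂ Red bs cs → List.Forall₂ Red as cs := by
  intro as bs cs h1
  induction h1 generalizing cs with
  | nil => intro h2; cases h2; exact List.Forall₂.nil
  | cons h t ih =>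
    intro h2
    cases h2 with
    | cons h' t' => exact List.Forall₂.cons (Relation.ReflTransGen.trans h h') (ih t')

def ClockGoal (k : Nat) : Prop :=
  ∀ (M N : Lam) (n y : Nat) (Ms : List Lam),
    Red M N → HeadN k M (lamN n (appList (var y) Ms)) →
    ∃ l ≤ k, ∃ Ns : List Lam,
      HeadN l N (lamN n (appList (var y) Ns)) ∧ List.Forall₂ Red Ms Ns

lemma clock_single (k : Nat) (IH : ∀ j < k, ClockGoal j) :
    ∀ (M N : Lam) (n y : Nat) (Ms : List Lam),
      Step M N → HeadN k M (lamN n (appList (var y) Ms)) →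
      ∃ l ≤ k, ∃ Ns : List Lam,
        HeadN l N (lamN n (appList (var y) Ns)) ∧ List.Forall₂ Red Ms Ns := by
  intro M N n y Ms hst hh
  match k with
  | 0 =>
    obtain rfl : M = lamN n (appList (var y) Ms) := hh
    obtain ⟨Ns, rfl, hf⟩ := hnf_step y n Ms hst
    exact ⟨0, le_refl 0, Ns, rfl, hf⟩
  | k + 1 =>
    obtain ⟨U, hU, hUk⟩ := hh
    rcases head_step_comm hU hst with rfl | ⟨N₁, hN₁, hred⟩
    · exact ⟨k, by omega, Ms, hUk,
        List.forall₂_same.2 (fun x _ => Relation.ReflTransGen.refl)⟩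
    · obtain ⟨l, hl, Ns, hH, hF⟩ := IH k (by omega) U N₁ n y Ms hred hUk
      exact ⟨l + 1, by omega, Ns, ⟨N₁, hN₁, hH⟩, hF⟩

lemma clock_main : ∀ k, ClockGoal k := by
  intro k
  induction k using Nat.strong_induction_on with
  | _ k IH =>
    intro M N n y Ms hred hhead
    induction hred using Relation.ReflTransGen.head_induction_on generalizing Ms with
    | refl =>
      exact ⟨k, le_refl k, Ms, hhead,
        List.forall₂_same.2 (fun x _ => Relation.ReflTransGen.refl)⟩
    | head hstep htail ih =>
      obtain ⟨l, hl, Ms', hH', hF'⟩ := clock_single k IH _ _ n y Ms hstep hhead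
      rcases Nat.lt_or_ge l k with hlt | hge
      · obtain ⟨l', hl', Ns, hH'', hF''⟩ := IH l hlt _ N n y Ms' htail hH'
        exact ⟨l', le_trans hl' (le_of_lt hlt), Ns, hH'', forall₂_red_trans hF' hF''⟩
      · have heq : l = k := le_antisymm hl hge
        subst heq
        obtain ⟨l', hl', Ns, hH'', hF''⟩ := ih Ms' hH'
        exact ⟨l', hl', Ns, hH'', forall₂_red_trans hF' hF''⟩

/-- Clock acceleration under reduction: if `M ↠β N` and `M` head-reduces in `k` steps
to an hnf `λx1…xn.y M1 … Mm`, then `N` head-reduces in `ℓ ≤ k` steps to an hnf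
`λx1…xn.y N1 … Nm` with the same prefix, head variable and number of arguments,
and `Mi ↠β Ni` for each `i`. -/
theorem clock_acceleration :
    ∀ (M N : Lam) (k n y : Nat) (Ms : List Lam),
      Red M N →
      HeadN k M (lamN n (appList (var y) Ms)) →
      ∃ l ≤ k, ∃ Ns : List Lam,
        HeadN l N (lamN n (appList (var y) Ns)) ∧ List.Forall₂ Red Ms Ns := by
  intro M N k n y Ms hred hhead
  exact clock_main k M N n y Ms hred hhead

end Lam
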